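/- Let V be a random variable taking values in a finite set 𝒱 with |𝒱| ≥ 2, let ρ : 𝒱 × 𝒱 → ℝ be symmetric, and let t ≥ 0 with neighborhood sizes N_max_t and N_min_t. For any random variables X, V̂ forming a Markov chain V → X → V̂ (with no assumption on the distribution of V), ℙ(ρ(V̂, V) > t) ≥ (H(V | X) − log N_max_t − log 2) / log((|𝒱| − N_min_t)/N_max_t), provided |𝒱| − N_min_t > N_max_t. -/

import Mathlib

open MeasureTheory ProbabilityTheory Real
open scoped Classical ENNReal

/-- Conditional Shannon entropy `H(V | X)` (natural log) of a finitely-valued random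
variable `V` given a general random variable `X`, defined via the conditional
probabilities `ℙ(V = v | σ(X))`. -/
noncomputable def condEntropyGen {Ω 𝒱 𝒳 : Type*} [MeasurableSpace Ω] [Fintype 𝒱]
    [MeasurableSpace 𝒳] (μ : Measure Ω) (V : Ω → 𝒱) (X : Ω → 𝒳) : ℝ :=
  ∫ ω, ∑ v : 𝒱, Real.negMulLog
    ((μ[(V ⁻¹' {v}).indicator (fun _ => (1 : ℝ)) | MeasurableSpace.comap X inferInstance]) ω) ∂μ

/-- Markov chain `V → X → W`: `V` and `W` are conditionally independent given `X`,
expressed via conditional expectations of indicator functions given `σ(X)`. -/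
def MarkovChain {Ω 𝒜 𝒳 ℬ : Type*} [MeasurableSpace Ω] [MeasurableSpace 𝒜]
    [MeasurableSpace 𝒳] [MeasurableSpace ℬ]
    (μ : Measure Ω) (V : Ω → 𝒜) (X : Ω → 𝒳) (W : Ω → ℬ) : Prop :=
  ∀ (A : Set 𝒜) (B : Set ℬ), MeasurableSet A → MeasurableSet B →
    (μ[fun ω => (V ⁻¹' A).indicator (fun _ => (1 : ℝ)) ω
          * (W ⁻¹' B).indicator (fun _ => (1 : ℝ)) ω
        | MeasurableSpace.comap X inferInstance])
      =ᵐ[μ]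
    fun ω => (μ[(V ⁻¹' A).indicator (fun _ => (1 : ℝ)) | MeasurableSpace.comap X inferInstance]) ω
          * (μ[(W ⁻¹' B).indicator (fun _ => (1 : ℝ)) | MeasurableSpace.comap X inferInstance]) ω

lemma tangent {x y : ℝ} (hx : 0 ≤ x) (hy : 0 < y) :
    Real.negMulLog x ≤ -x * Real.log y + y - x := by
  rcases hx.eq_or_lt with h | h
  · simp [← h, hy.le]
  · have h1 : Real.log (y / x) ≤ y / x - 1 := Real.log_le_sub_one_of_pos (by positivity)
    rw [Real.log_div hy.ne' h.ne'] at h1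
    have := mul_le_mul_of_nonneg_left h1 h.le
    rw [Real.negMulLog]
    rw [mul_sub, mul_sub, mul_div_cancel₀ _ h.ne'] at this
    nlinarith

lemma negMulLog_le_one {x : ℝ} (hx : 0 ≤ x) : Real.negMulLog x ≤ 1 := by
  rcases hx.eq_or_lt with h | h
  · simp [← h]
  · have := tangent hx one_pos
    simp only [Real.log_one] at this
    nlinarith

lemma abs_negMulLog_le_one {x : ℝ} (hx : 0 ≤ x) (hx1 : x ≤ 1) : |Real.negMulLog x| ≤ 1 := by
  rw [abs_le]
  exact ⟨by linarith [Real.negMulLog_nonneg hx hx1], negMulLog_le_one hx⟩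

lemma binEnt_le_log_two {a b : ℝ} (ha : 0 ≤ a) (hb : 0 ≤ b) (hab : a + b = 1) :
    Real.negMulLog a + Real.negMulLog b ≤ Real.log 2 := by
  have h1 := tangent ha (by norm_num : (0:ℝ) < 1/2)
  have h2 := tangent hb (by norm_num : (0:ℝ) < 1/2)
  have hl : Real.log (1/2) = -Real.log 2 := by
    rw [one_div, Real.log_inv]
  rw [hl] at h1 h2
  nlinarith [Real.log_nonneg (by norm_num : (1:ℝ) ≤ 2)]

lemma sum_negMulLog_le {𝒱 : Type*} [Fintype 𝒱] (s : Finset 𝒱) (q : 𝒱 → ℝ)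
    (hq : ∀ v, 0 ≤ q v) :
    ∑ v ∈ s, Real.negMulLog (q v)
      ≤ Real.negMulLog (∑ v ∈ s, q v) + (∑ v ∈ s, q v) * Real.log s.card := by
  set a := ∑ v ∈ s, q v with ha
  have ha0 : 0 ≤ a := Finset.sum_nonneg fun v _ => hq v
  rcases ha0.eq_or_lt with h | h
  · have hz : ∀ v ∈ s, q v = 0 := by
      intro v hv
      exact le_antisymm (by
        have := Finset.single_le_sum (fun v _ => hq v) hv
        linarith) (hq v)
    have : ∑ v ∈ s, Real.negMulLog (q v) = 0 := by
      apply Finset.sum_eq_zero; intro v hv; rw [hz v hv]; simp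
    rw [this, ← h]; simp
  · have hsne : s.Nonempty := by
      by_contra hne
      rw [Finset.not_nonempty_iff_eq_empty] at hne
      rw [ha, hne, Finset.sum_empty] at h; exact lt_irrefl _ h
    have hcard : (0:ℝ) < s.card := by
      exact_mod_cast Finset.card_pos.mpr hsne
    set y : ℝ := a / s.card with hy
    have hy0 : 0 < y := by positivity
    calc ∑ v ∈ s, Real.negMulLog (q v)
        ≤ ∑ v ∈ s, (-(q v) * Real.log y + y - q v) :=
          Finset.sum_le_sum fun v _ => tangent (hq v) hy0
      _ = -a * Real.log y + s.card * y - a := by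
          rw [Finset.sum_sub_distrib, Finset.sum_add_distrib, ← Finset.sum_neg_distrib,
            ← Finset.sum_mul, ← ha, Finset.sum_const, nsmul_eq_mul]
      _ = Real.negMulLog a + a * Real.log s.card := by
          rw [hy, Real.log_div h.ne' hcard.ne', Real.negMulLog]
          field_simp
          ring

/-- **Fano-type bound without assumptions on the distribution of `V`.** For any Markov
chain `V → X → V̂` with `V, V̂` taking values in a finite set `𝒱` of cardinality at least
2, a symmetric `ρ` and `t ≥ 0`, provided `|𝒱| - N_min_t > N_max_t`, one has
`ℙ(ρ(V̂, V) > t) ≥ (H(V | X) - log N_max_t - log 2) / log((|𝒱| - N_min_t)/N_max_t)`. -/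
theorem fano_bound_no_distribution_assumption
    {Ω 𝒳 𝒱 : Type*} [MeasurableSpace Ω] [MeasurableSpace 𝒳]
    [Fintype 𝒱] [MeasurableSpace 𝒱] [MeasurableSingletonClass 𝒱]
    (hcard : 2 ≤ Fintype.card 𝒱)
    (μ : Measure Ω) [IsProbabilityMeasure μ]
    (V : Ω → 𝒱) (X : Ω → 𝒳) (Vhat : Ω → 𝒱)
    (hV : Measurable V) (hX : Measurable X) (hVhat : Measurable Vhat)
    (hmarkov : MarkovChain μ V X Vhat)
    (ρ : 𝒱 → 𝒱 → ℝ) (hsymm : ∀ v w, ρ v w = ρ w v)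
    (t : ℝ) (ht : 0 ≤ t)
    (Nmax Nmin : ℕ)
    (hNmax : Nmax = Finset.univ.sup fun v : 𝒱 =>
      (Finset.univ.filter fun v' : 𝒱 => ρ v v' ≤ t).card)
    (hNmin : Nmin = sInf (Set.range fun v : 𝒱 =>
      (Finset.univ.filter fun v' : 𝒱 => ρ v v' ≤ t).card))
    (hsep : Nmax + Nmin < Fintype.card 𝒱) :
    (μ {ω | ρ (Vhat ω) (V ω) > t}).toReal
      ≥ (condEntropyGen μ V X - Real.log Nmax - Real.log 2)
          / Real.log ((Fintype.card 𝒱 - Nmin : ℝ) / Nmax) := by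
  classical
  -- trivial case Nmax = 0
  rcases Nat.eq_zero_or_pos Nmax with hNmax0 | hNmaxpos
  · rw [ge_iff_le, hNmax0]
    simp only [Nat.cast_zero, div_zero, Real.log_zero]
    exact ENNReal.toReal_nonneg
  -- setup
  have hm : MeasurableSpace.comap X inferInstance ≤ _ := hX.comap_le
  haveI : SigmaFinite (μ.trim hm) := inferInstance
  set f : 𝒱 → Ω → ℝ :=
    fun v => μ[(V ⁻¹' {v}).indicator (fun _ => (1 : ℝ)) | MeasurableSpace.comap X inferInstance]
    with hf_def
  set g : 𝒱 → Ω → ℝ :=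
    fun w => μ[(Vhat ⁻¹' {w}).indicator (fun _ => (1 : ℝ)) | MeasurableSpace.comap X inferInstance]
    with hg_def
  have hAmeas : ∀ v : 𝒱, MeasurableSet (V ⁻¹' {v}) :=
    fun v => hV (measurableSet_singleton v)
  have hBmeas : ∀ w : 𝒱, MeasurableSet (Vhat ⁻¹' {w}) :=
    fun w => hVhat (measurableSet_singleton w)
  have hind_int : ∀ {s : Set Ω}, MeasurableSet s →
      Integrable (s.indicator (fun _ => (1 : ℝ))) μ :=
    fun hs => (integrable_const (1:ℝ)).indicator hs
  have hind01 : ∀ (s : Set Ω) (ω : Ω), 0 ≤ s.indicator (fun _ => (1:ℝ)) ω ∧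
      s.indicator (fun _ => (1:ℝ)) ω ≤ 1 := by
    intro s ω
    by_cases h : ω ∈ s <;> simp [Set.indicator_apply, h]
  -- basic facts about f and g
  have hf_aesm : ∀ v, AEStronglyMeasurable (f v) μ :=
    fun v => (stronglyMeasurable_condExp.mono hm).aestronglyMeasurable
  have hg_aesm : ∀ w, AEStronglyMeasurable (g w) μ :=
    fun w => (stronglyMeasurable_condExp.mono hm).aestronglyMeasurable
  have hf_int : ∀ v, Integrable (f v) μ := fun v => integrable_condExp
  have hg_int : ∀ w, Integrable (g w) μ := fun w => integrable_condExp
  have hf0 : ∀ v, 0 ≤ᵐ[μ] f v := fun v =>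
    condExp_nonneg (Filter.Eventually.of_forall fun ω => (hind01 _ ω).1)
  have hg0 : ∀ w, 0 ≤ᵐ[μ] g w := fun w =>
    condExp_nonneg (Filter.Eventually.of_forall fun ω => (hind01 _ ω).1)
  have hcond_le_one : ∀ {s : Set Ω}, MeasurableSet s →
      (μ[s.indicator (fun _ => (1:ℝ)) | MeasurableSpace.comap X inferInstance])
        ≤ᵐ[μ] fun _ => 1 := by
    intro s hs
    have h1 : (μ[(fun _ => (1:ℝ)) | MeasurableSpace.comap X inferInstance]) = fun _ => (1:ℝ) :=
      condExp_const hm 1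
    have := condExp_mono (m := MeasurableSpace.comap X inferInstance)
      (hind_int hs) (integrable_const (1:ℝ))
      (Filter.Eventually.of_forall fun ω => (hind01 s ω).2)
    rwa [h1] at this
  have hf1 : ∀ v, f v ≤ᵐ[μ] fun _ => 1 := fun v => hcond_le_one (hAmeas v)
  have hg1 : ∀ w, g w ≤ᵐ[μ] fun _ => 1 := fun w => hcond_le_one (hBmeas w)
  -- sum of g's is 1 a.e.
  have hgsum : (fun ω => ∑ w, g w ω) =ᵐ[μ] fun _ => 1 := by
    have h1 : (∑ w : 𝒱, fun ω => (Vhat ⁻¹' {w}).indicator (fun _ => (1:ℝ)) ω)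
        = fun _ => (1:ℝ) := by
      funext ω
      simp only [Finset.sum_apply, Set.indicator_apply, Set.mem_preimage,
        Set.mem_singleton_iff]
      rw [Finset.sum_ite_eq Finset.univ (Vhat ω) (fun _ => (1:ℝ))]
      simp
    have h2 := condExp_finset_sum (μ := μ) (m := MeasurableSpace.comap X inferInstance)
      (s := Finset.univ)
      (f := fun w => (Vhat ⁻¹' {w}).indicator (fun _ => (1:ℝ)))
      (fun w _ => hind_int (hBmeas w))
    rw [show (∑ w : 𝒱, fun ω => (Vhat ⁻¹' {w}).indicator (fun _ => (1:ℝ)) ω)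
        = ∑ w : 𝒱, (Vhat ⁻¹' {w}).indicator (fun _ => (1:ℝ)) from rfl] at h1
    rw [h1] at h2
    rw [condExp_const hm (1:ℝ)] at h2
    refine Filter.EventuallyEq.trans ?_ h2.symm
    exact Filter.Eventually.of_forall fun ω => by simp [hg_def]
  -- integrability helper
  have hbdd_int : ∀ {h : Ω → ℝ}, AEStronglyMeasurable h μ → (∀ᵐ ω ∂μ, |h ω| ≤ 1) →
      Integrable h μ := by
    intro h hsm hb
    exact (integrable_const (1:ℝ)).mono' hsm (hb.mono fun ω hh => by
      simpa [Real.norm_eq_abs] using hh)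
  have hfg_int : ∀ v w, Integrable (fun ω => f v ω * g w ω) μ := by
    intro v w
    refine hbdd_int ((hf_aesm v).mul (hg_aesm w)) ?_
    filter_upwards [hf0 v, hf1 v, hg0 w, hg1 w] with ω h1 h2 h3 h4
    rw [abs_mul]
    simp only [Pi.zero_apply] at h1 h3
    calc |f v ω| * |g w ω| ≤ 1 * 1 := by
          apply mul_le_mul
          · rw [abs_of_nonneg h1]; exact h2
          · rw [abs_of_nonneg h3]; exact h4
          · exact abs_nonneg _
          · norm_num
      _ = 1 := by norm_num
  have hnml_aesm : ∀ v, AEStronglyMeasurable (fun ω => Real.negMulLog (f v ω)) μ :=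
    fun v => Real.continuous_negMulLog.comp_aestronglyMeasurable (hf_aesm v)
  have hnml_bd : ∀ v, ∀ᵐ ω ∂μ, |Real.negMulLog (f v ω)| ≤ 1 := by
    intro v
    filter_upwards [hf0 v, hf1 v] with ω h1 h2
    exact abs_negMulLog_le_one h1 h2
  have hnml_int : ∀ v, Integrable (fun ω => Real.negMulLog (f v ω)) μ :=
    fun v => hbdd_int (hnml_aesm v) (hnml_bd v)
  have hgnml_int : ∀ v w, Integrable (fun ω => g w ω * Real.negMulLog (f v ω)) μ := by
    intro v w
    refine hbdd_int ((hg_aesm w).mul (hnml_aesm v)) ?_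
    filter_upwards [hg0 w, hg1 w, hnml_bd v] with ω h1 h2 h3
    rw [abs_mul]
    calc |g w ω| * |Real.negMulLog (f v ω)| ≤ 1 * 1 := by
          apply mul_le_mul
          · rw [abs_of_nonneg h1]; exact h2
          · exact h3
          · exact abs_nonneg _
          · norm_num
      _ = 1 := by norm_num
  -- the joint and marginal probabilities
  set p : 𝒱 → 𝒱 → ℝ := fun v w => (μ (V ⁻¹' {v} ∩ Vhat ⁻¹' {w})).toReal with hp_def
  set pM : 𝒱 → ℝ := fun w => (μ (Vhat ⁻¹' {w})).toReal with hpM_def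
  have hp0 : ∀ v w, 0 ≤ p v w := fun v w => ENNReal.toReal_nonneg
  have hpM0 : ∀ w, 0 ≤ pM w := fun w => ENNReal.toReal_nonneg
  have hgint : ∀ w, ∫ ω, g w ω ∂μ = pM w := by
    intro w
    rw [hg_def]
    rw [integral_condExp hm, integral_indicator_const (1:ℝ) (hBmeas w)]
    simp [hpM_def, measureReal_def]
  have hfgint : ∀ v w, ∫ ω, f v ω * g w ω ∂μ = p v w := by
    intro v w
    have h1 := hmarkov {v} {w} (measurableSet_singleton v) (measurableSet_singleton w)
    have h2 : ∫ ω, f v ω * g w ω ∂μ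
        = ∫ ω, (μ[fun ω => (V ⁻¹' {v}).indicator (fun _ => (1:ℝ)) ω
            * (Vhat ⁻¹' {w}).indicator (fun _ => (1:ℝ)) ω
            | MeasurableSpace.comap X inferInstance]) ω ∂μ :=
      integral_congr_ae h1.symm
    rw [h2, integral_condExp hm]
    have h3 : (fun ω => (V ⁻¹' {v}).indicator (fun _ => (1:ℝ)) ω
        * (Vhat ⁻¹' {w}).indicator (fun _ => (1:ℝ)) ω)
        = (V ⁻¹' {v} ∩ Vhat ⁻¹' {w}).indicator (fun _ => (1:ℝ)) := by
      funext ω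
      by_cases hA : ω ∈ V ⁻¹' {v} <;> by_cases hB : ω ∈ Vhat ⁻¹' {w} <;>
        simp [Set.indicator_apply, hA, hB]
    rw [h3, integral_indicator_const (1:ℝ) ((hAmeas v).inter (hBmeas w))]
    simp [hp_def, measureReal_def]
  -- key per-pair inequality
  have hkey : ∀ v w, ∫ ω, g w ω * Real.negMulLog (f v ω) ∂μ
      ≤ pM w * Real.negMulLog (p v w / pM w) := by
    intro v w
    rcases (hpM0 w).eq_or_lt with hpMw | hpMw
    · -- pM w = 0 : g w = 0 a.e.
      have hg_zero : g w =ᵐ[μ] 0 := by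
        rw [← integral_eq_zero_iff_of_nonneg_ae (hg0 w) (hg_int w)]
        rw [hgint w, ← hpMw]
      have : (fun ω => g w ω * Real.negMulLog (f v ω)) =ᵐ[μ] 0 := by
        filter_upwards [hg_zero] with ω hω
        simp [hω]
      rw [integral_congr_ae this]
      simp [← hpMw]
    · rcases (hp0 v w).eq_or_lt with hpvw | hpvw
      · -- p v w = 0 : f v * g w = 0 a.e.
        have hfg_zero : (fun ω => f v ω * g w ω) =ᵐ[μ] 0 := by
          rw [← integral_eq_zero_iff_of_nonneg_ae ?_ (hfg_int v w)]
          · rw [hfgint v w, ← hpvw]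
          · filter_upwards [hf0 v, hg0 w] with ω h1 h2
            exact mul_nonneg h1 h2
        have : (fun ω => g w ω * Real.negMulLog (f v ω)) =ᵐ[μ] 0 := by
          filter_upwards [hfg_zero] with ω hω
          rcases mul_eq_zero.mp hω with h | h
          · simp [h]
          · simp [h]
        rw [integral_congr_ae this]
        simp [← hpvw]
      · -- main case
        set y : ℝ := p v w / pM w with hy_def
        have hy0 : 0 < y := div_pos hpvw hpMw
        have hpt : ∀ᵐ ω ∂μ, g w ω * Real.negMulLog (f v ω)
            ≤ (-Real.log y - 1) * (f v ω * g w ω) + y * g w ω := by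
          filter_upwards [hf0 v, hg0 w] with ω h1 h2
          have := mul_le_mul_of_nonneg_left (tangent h1 hy0) h2
          nlinarith
        have hRHS_int : Integrable
            (fun ω => (-Real.log y - 1) * (f v ω * g w ω) + y * g w ω) μ :=
          ((hfg_int v w).const_mul _).add ((hg_int w).const_mul y)
        have h5 := integral_mono_ae (hgnml_int v w) hRHS_int hpt
        rw [integral_add ((hfg_int v w).const_mul _) ((hg_int w).const_mul y),
          integral_const_mul, integral_const_mul, hfgint v w, hgint w] at h5
        have hyy : y * pM w = p v w := div_mul_cancel₀ _ hpMw.ne'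
        calc ∫ ω, g w ω * Real.negMulLog (f v ω) ∂μ
            ≤ (-Real.log y - 1) * p v w + y * pM w := h5
          _ = pM w * Real.negMulLog y := by
              rw [Real.negMulLog, hyy]
              have : pM w * (-y * Real.log y) = -(y * pM w) * Real.log y := by ring
              rw [this, hyy]
              ring
  -- decomposition of the conditional entropy
  have step1 : condEntropyGen μ V X = ∑ v, ∫ ω, Real.negMulLog (f v ω) ∂μ := by
    rw [condEntropyGen]
    exact integral_finset_sum Finset.univ (fun v _ => hnml_int v)
  have step2 : ∀ v, ∫ ω, Real.negMulLog (f v ω) ∂μ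
      = ∑ w, ∫ ω, g w ω * Real.negMulLog (f v ω) ∂μ := by
    intro v
    have h1 : (fun ω => Real.negMulLog (f v ω))
        =ᵐ[μ] fun ω => ∑ w, g w ω * Real.negMulLog (f v ω) := by
      filter_upwards [hgsum] with ω hω
      rw [← Finset.sum_mul, hω]
      simp
    rw [integral_congr_ae h1]
    exact integral_finset_sum Finset.univ (fun w _ => hgnml_int v w)
  have hH_le : condEntropyGen μ V X ≤ ∑ w, ∑ v, pM w * Real.negMulLog (p v w / pM w) := by
    rw [step1]
    have h1 : ∑ v, ∫ ω, Real.negMulLog (f v ω) ∂μ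
        = ∑ v, ∑ w, ∫ ω, g w ω * Real.negMulLog (f v ω) ∂μ :=
      Finset.sum_congr rfl (fun v _ => step2 v)
    rw [h1, Finset.sum_comm]
    exact Finset.sum_le_sum fun w _ => Finset.sum_le_sum fun v _ => hkey v w
  -- discrete decompositions
  have hple : ∀ v w, p v w ≤ pM w := fun v w =>
    ENNReal.toReal_mono (measure_ne_top μ _) (measure_mono Set.inter_subset_right)
  have hsum_p : ∀ w, ∑ v, p v w = pM w := by
    intro w
    have hU : Vhat ⁻¹' {w} = ⋃ v ∈ (Finset.univ : Finset 𝒱), (V ⁻¹' {v} ∩ Vhat ⁻¹' {w}) := by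
      ext ω
      simp only [Set.mem_iUnion, Set.mem_inter_iff, Set.mem_preimage, Set.mem_singleton_iff,
        Finset.mem_univ, exists_prop, true_and]
      constructor
      · intro h; exact ⟨V ω, rfl, h⟩
      · rintro ⟨v, _, h⟩; exact h
    have hd : (↑(Finset.univ : Finset 𝒱) : Set 𝒱).PairwiseDisjoint
        (fun v => V ⁻¹' {v} ∩ Vhat ⁻¹' {w}) := by
      intro x _ z _ hxz
      refine Set.disjoint_left.mpr ?_
      rintro ω ⟨h1, _⟩ ⟨h2, _⟩
      exact hxz ((Set.mem_singleton_iff.mp h1).symm.trans (Set.mem_singleton_iff.mp h2))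
    have : pM w = (μ (⋃ v ∈ (Finset.univ : Finset 𝒱), (V ⁻¹' {v} ∩ Vhat ⁻¹' {w}))).toReal := by
      rw [← hU]
    rw [this, measure_biUnion_finset hd (fun v _ => (hAmeas v).inter (hBmeas w)),
      ENNReal.toReal_sum (fun v _ => measure_ne_top μ _)]
  have hsum_pM : ∑ w, pM w = 1 := by
    have hU : (Set.univ : Set Ω) = ⋃ w ∈ (Finset.univ : Finset 𝒱), Vhat ⁻¹' {w} := by
      ext ω
      simp
    have hd : (↑(Finset.univ : Finset 𝒱) : Set 𝒱).PairwiseDisjoint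
        (fun w => Vhat ⁻¹' {w}) := by
      intro x _ z _ hxz
      refine Set.disjoint_left.mpr ?_
      rintro ω h1 h2
      exact hxz ((Set.mem_singleton_iff.mp h1).symm.trans (Set.mem_singleton_iff.mp h2))
    have h1 : (1:ℝ) = (μ (Set.univ : Set Ω)).toReal := by simp
    rw [h1, hU, measure_biUnion_finset hd (fun w _ => hBmeas w),
      ENNReal.toReal_sum (fun w _ => measure_ne_top μ _)]
  have hPerr : (μ {ω | ρ (Vhat ω) (V ω) > t}).toReal
      = ∑ w, ∑ v ∈ Finset.univ.filter (fun v => ¬ ρ w v ≤ t), p v w := by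
    have hE : {ω | ρ (Vhat ω) (V ω) > t}
        = ⋃ q ∈ Finset.univ.filter (fun q : 𝒱 × 𝒱 => ¬ ρ q.2 q.1 ≤ t),
            (V ⁻¹' {q.1} ∩ Vhat ⁻¹' {q.2}) := by
      ext ω
      simp only [Set.mem_setOf_eq, Set.mem_iUnion, Finset.mem_filter, Finset.mem_univ,
        true_and, Set.mem_inter_iff, Set.mem_preimage, Set.mem_singleton_iff, exists_prop,
        gt_iff_lt, not_le]
      constructor
      · intro h; exact ⟨(V ω, Vhat ω), h, rfl, rfl⟩
      · rintro ⟨⟨v, w⟩, h, h1, h2⟩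
        rw [← h1, ← h2] at h
        exact h
    have hd : (↑(Finset.univ.filter (fun q : 𝒱 × 𝒱 => ¬ ρ q.2 q.1 ≤ t)) : Set (𝒱 × 𝒱)).PairwiseDisjoint
        (fun q => V ⁻¹' {q.1} ∩ Vhat ⁻¹' {q.2}) := by
      intro x _ z _ hxz
      refine Set.disjoint_left.mpr ?_
      rintro ω ⟨h1, h2⟩ ⟨h3, h4⟩
      exact hxz (Prod.ext
        ((Set.mem_singleton_iff.mp h1).symm.trans (Set.mem_singleton_iff.mp h3))
        ((Set.mem_singleton_iff.mp h2).symm.trans (Set.mem_singleton_iff.mp h4)))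
    rw [hE, measure_biUnion_finset hd (fun q _ => (hAmeas q.1).inter (hBmeas q.2)),
      ENNReal.toReal_sum (fun q _ => measure_ne_top μ _)]
    rw [Finset.sum_filter, Fintype.sum_prod_type, Finset.sum_comm]
    refine Finset.sum_congr rfl fun w _ => ?_
    rw [Finset.sum_filter]
  -- numeric setup
  set D := Real.log ((Fintype.card 𝒱 - Nmin : ℝ) / Nmax) with hD_def
  have hNmaxR : (0:ℝ) < Nmax := by exact_mod_cast hNmaxpos
  have hsepR : (Nmax : ℝ) + Nmin < Fintype.card 𝒱 := by exact_mod_cast hsep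
  have hNminR : (0:ℝ) ≤ Nmin := Nat.cast_nonneg _
  have hcmN_pos : (0:ℝ) < (Fintype.card 𝒱 : ℝ) - Nmin := by linarith
  have hD_eq : D = Real.log ((Fintype.card 𝒱 : ℝ) - Nmin) - Real.log Nmax := by
    rw [hD_def, Real.log_div hcmN_pos.ne' hNmaxR.ne']
  have hD_pos : 0 < D := by
    rw [hD_def]
    apply Real.log_pos
    rw [one_lt_div hNmaxR]
    linarith
  -- cardinality facts
  have hSw_le : ∀ w : 𝒱, (Finset.univ.filter (fun v => ρ w v ≤ t)).card ≤ Nmax := by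
    intro w
    rw [hNmax]
    exact Finset.le_sup (f := fun v : 𝒱 => (Finset.univ.filter fun v' : 𝒱 => ρ v v' ≤ t).card)
      (Finset.mem_univ w)
  have hSw_ge : ∀ w : 𝒱, Nmin ≤ (Finset.univ.filter (fun v => ρ w v ≤ t)).card := by
    intro w
    rw [hNmin]
    exact Nat.sInf_le ⟨w, rfl⟩
  have hScc : ∀ w : 𝒱, (Finset.univ.filter (fun v => ¬ ρ w v ≤ t)).card
      = Fintype.card 𝒱 - (Finset.univ.filter (fun v => ρ w v ≤ t)).card := by
    intro w
    have := Finset.card_filter_add_card_filter_not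
      (s := (Finset.univ : Finset 𝒱)) (p := fun v => ρ w v ≤ t)
    rw [Finset.card_univ] at this
    omega
  -- per-w discrete bound
  have hw_bound : ∀ w : 𝒱, ∑ v, pM w * Real.negMulLog (p v w / pM w)
      ≤ pM w * (Real.log 2 + Real.log Nmax)
        + (∑ v ∈ Finset.univ.filter (fun v => ¬ ρ w v ≤ t), p v w) * D := by
    intro w
    rcases (hpM0 w).eq_or_lt with hpMw | hpMw
    · have hpz : ∀ v, p v w = 0 := fun v =>
        le_antisymm ((hple v w).trans hpMw.ge) (hp0 v w)
      simp [← hpMw, hpz]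
    · set q : 𝒱 → ℝ := fun v => p v w / pM w with hq_def
      have hq0 : ∀ v, 0 ≤ q v := fun v => div_nonneg (hp0 v w) (hpM0 w)
      have hqsum : ∑ v, q v = 1 := by
        rw [hq_def, ← Finset.sum_div, hsum_p w, div_self hpMw.ne']
      set a := ∑ v ∈ Finset.univ.filter (fun v => ρ w v ≤ t), q v with ha_def
      set b := ∑ v ∈ Finset.univ.filter (fun v => ¬ ρ w v ≤ t), q v with hb_def
      have hab : a + b = 1 := by
        rw [ha_def, hb_def, Finset.sum_filter_add_sum_filter_not, hqsum]
      have ha0 : 0 ≤ a := Finset.sum_nonneg fun v _ => hq0 v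
      have hb0 : 0 ≤ b := Finset.sum_nonneg fun v _ => hq0 v
      have h1 : ∑ v ∈ Finset.univ.filter (fun v => ρ w v ≤ t), Real.negMulLog (q v)
          ≤ Real.negMulLog a
            + a * Real.log ((Finset.univ.filter (fun v => ρ w v ≤ t)).card) := by
        have := sum_negMulLog_le (Finset.univ.filter (fun v => ρ w v ≤ t)) q hq0
        rwa [← ha_def] at this
      have h2 : ∑ v ∈ Finset.univ.filter (fun v => ¬ ρ w v ≤ t), Real.negMulLog (q v)
          ≤ Real.negMulLog b
            + b * Real.log ((Finset.univ.filter (fun v => ¬ ρ w v ≤ t)).card) := by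
        have := sum_negMulLog_le (Finset.univ.filter (fun v => ¬ ρ w v ≤ t)) q hq0
        rwa [← hb_def] at this
      have h3 : a * Real.log ((Finset.univ.filter (fun v => ρ w v ≤ t)).card)
          ≤ a * Real.log Nmax := by
        rcases Nat.eq_zero_or_pos (Finset.univ.filter (fun v => ρ w v ≤ t)).card with h0 | h0
        · have ha' : a = 0 := by
            rw [ha_def, Finset.card_eq_zero.mp h0, Finset.sum_empty]
          simp [ha']
        · refine mul_le_mul_of_nonneg_left ?_ ha0
          apply Real.log_le_log (by exact_mod_cast h0)
          exact_mod_cast hSw_le w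
      have hcc_pos : 0 < (Finset.univ.filter (fun v => ¬ ρ w v ≤ t)).card := by
        rw [hScc w]
        have := hSw_le w
        omega
      have h4 : b * Real.log ((Finset.univ.filter (fun v => ¬ ρ w v ≤ t)).card)
          ≤ b * Real.log ((Fintype.card 𝒱 : ℝ) - Nmin) := by
        refine mul_le_mul_of_nonneg_left ?_ hb0
        apply Real.log_le_log (by exact_mod_cast hcc_pos)
        rw [hScc w]
        have hle : (Finset.univ.filter (fun v => ρ w v ≤ t)).card ≤ Fintype.card 𝒱 := by
          have := hSw_le w
          omega
        rw [Nat.cast_sub hle]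
        have := hSw_ge w
        have : (Nmin : ℝ) ≤ (Finset.univ.filter (fun v => ρ w v ≤ t)).card := by
          exact_mod_cast this
        linarith
      have h5 := binEnt_le_log_two ha0 hb0 hab
      have hsplit : ∑ v, Real.negMulLog (q v)
          = ∑ v ∈ Finset.univ.filter (fun v => ρ w v ≤ t), Real.negMulLog (q v)
            + ∑ v ∈ Finset.univ.filter (fun v => ¬ ρ w v ≤ t), Real.negMulLog (q v) :=
        (Finset.sum_filter_add_sum_filter_not Finset.univ _ _).symm
      have h_ent : ∑ v, Real.negMulLog (q v)
          ≤ Real.log 2 + a * Real.log Nmax + b * Real.log ((Fintype.card 𝒱 : ℝ) - Nmin) := by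
        rw [hsplit]
        linarith
      have ha' : a = 1 - b := by linarith
      rw [ha'] at h_ent
      have h_ent2 : ∑ v, Real.negMulLog (q v) ≤ Real.log 2 + Real.log Nmax + b * D := by
        rw [hD_eq]
        calc ∑ v, Real.negMulLog (q v)
            ≤ Real.log 2 + (1 - b) * Real.log Nmax
              + b * Real.log ((Fintype.card 𝒱 : ℝ) - Nmin) := h_ent
          _ = Real.log 2 + Real.log Nmax
              + b * (Real.log ((Fintype.card 𝒱 : ℝ) - Nmin) - Real.log Nmax) := by ring
      have hpb : pM w * b = ∑ v ∈ Finset.univ.filter (fun v => ¬ ρ w v ≤ t), p v w := by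
        rw [hb_def, Finset.mul_sum]
        refine Finset.sum_congr rfl fun v _ => ?_
        rw [hq_def]
        rw [mul_comm, div_mul_cancel₀ _ hpMw.ne']
      calc ∑ v, pM w * Real.negMulLog (q v)
          = pM w * ∑ v, Real.negMulLog (q v) := (Finset.mul_sum _ _ _).symm
        _ ≤ pM w * (Real.log 2 + Real.log Nmax + b * D) :=
            mul_le_mul_of_nonneg_left h_ent2 (hpM0 w)
        _ = pM w * (Real.log 2 + Real.log Nmax) + (pM w * b) * D := by ring
        _ = pM w * (Real.log 2 + Real.log Nmax)
            + (∑ v ∈ Finset.univ.filter (fun v => ¬ ρ w v ≤ t), p v w) * D := by rw [hpb]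
  -- total bound
  have htotal : condEntropyGen μ V X ≤ Real.log 2 + Real.log Nmax
      + (μ {ω | ρ (Vhat ω) (V ω) > t}).toReal * D := by
    calc condEntropyGen μ V X
        ≤ ∑ w, ∑ v, pM w * Real.negMulLog (p v w / pM w) := hH_le
      _ ≤ ∑ w, (pM w * (Real.log 2 + Real.log Nmax)
            + (∑ v ∈ Finset.univ.filter (fun v => ¬ ρ w v ≤ t), p v w) * D) :=
          Finset.sum_le_sum fun w _ => hw_bound w
      _ = (∑ w, pM w) * (Real.log 2 + Real.log Nmax)
            + (∑ w, ∑ v ∈ Finset.univ.filter (fun v => ¬ ρ w v ≤ t), p v w) * D := by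
          rw [Finset.sum_add_distrib, ← Finset.sum_mul, ← Finset.sum_mul]
      _ = Real.log 2 + Real.log Nmax
            + (μ {ω | ρ (Vhat ω) (V ω) > t}).toReal * D := by
          rw [hsum_pM, ← hPerr]
          ring
  rw [ge_iff_le, div_le_iff₀ hD_pos]
  linarith
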